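/- Let x = (x_1, ..., x_n) be a fixed real vector and let X = (X_1, ..., X_n) be a random vector uniformly distributed over all n! permutations of x. Then X_1, ..., X_n are negatively associated. -/

import Mathlib

open MeasureTheory in
/-- Random variables `X i` are negatively associated under `μ`: for any disjoint index sets
`I, J` and any two concordant monotone functions `f, g`,
`E[f(X_I) g(X_J)] ≤ E[f(X_I)] E[g(X_J)]`. -/
def NegAssoc {Ω ι : Type*} [MeasurableSpace Ω] (μ : Measure Ω) (X : ι → Ω → ℝ) : Prop :=
  ∀ (I J : Finset ι), Disjoint I J →
    ∀ (f : (↥I → ℝ) → ℝ) (g : (↥J → ℝ) → ℝ),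
      ((Monotone f ∧ Monotone g) ∨ (Antitone f ∧ Antitone g)) →
      (∫ ω, f (fun i => X i.1 ω) * g (fun j => X j.1 ω) ∂μ) ≤
        (∫ ω, f (fun i => X i.1 ω) ∂μ) * (∫ ω, g (fun j => X j.1 ω) ∂μ)

open Finset

section Subset
variable {α : Type*} [DecidableEq α]

/-- Double counting: summing `h (C.erase c)` over `(k+1)`-subsets `C` and `c ∈ C`
equals `(|S|-k)` times the sum of `h` over `k`-subsets. -/
lemma pair_count (S : Finset α) (k : ℕ) (h : Finset α → ℝ) :
    ∑ C ∈ S.powersetCard (k+1), ∑ c ∈ C, h (C.erase c)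
      = ((S.card - k : ℕ) : ℝ) * ∑ B ∈ S.powersetCard k, h B := by
  have hrhs : ((S.card - k : ℕ) : ℝ) * ∑ B ∈ S.powersetCard k, h B
      = ∑ B ∈ S.powersetCard k, ∑ _c ∈ S \ B, h B := by
    rw [Finset.mul_sum]
    refine Finset.sum_congr rfl fun B hB => ?_
    rw [Finset.mem_powersetCard] at hB
    rw [Finset.sum_const, Finset.card_sdiff_of_subset hB.1, hB.2, nsmul_eq_mul]
  rw [hrhs, Finset.sum_sigma' (S.powersetCard (k+1)) (fun C => C) (fun C c => h (C.erase c)),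
    Finset.sum_sigma' (S.powersetCard k) (fun B => S \ B) (fun B _ => h B)]
  refine Finset.sum_nbij' (fun p => ⟨p.1.erase p.2, p.2⟩) (fun p => ⟨insert p.2 p.1, p.2⟩)
    ?_ ?_ ?_ ?_ ?_
  · rintro ⟨C, c⟩ hp
    rw [Finset.mem_sigma, Finset.mem_powersetCard] at hp
    obtain ⟨⟨hCS, hCc⟩, hc⟩ := hp
    refine Finset.mem_sigma.2 ⟨Finset.mem_powersetCard.2 ⟨(Finset.erase_subset _ _).trans hCS, ?_⟩, ?_⟩
    · rw [Finset.card_erase_of_mem hc, hCc]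
      omega
    · exact Finset.mem_sdiff.2 ⟨hCS hc, Finset.notMem_erase _ _⟩
  · rintro ⟨B, c⟩ hp
    rw [Finset.mem_sigma, Finset.mem_powersetCard] at hp
    obtain ⟨⟨hBS, hBc⟩, hc⟩ := hp
    rw [Finset.mem_sdiff] at hc
    refine Finset.mem_sigma.2 ⟨Finset.mem_powersetCard.2 ⟨?_, ?_⟩, Finset.mem_insert_self _ _⟩
    · exact Finset.insert_subset hc.1 hBS
    · rw [Finset.card_insert_of_notMem hc.2, hBc]
  · rintro ⟨C, c⟩ hp
    rw [Finset.mem_sigma] at hp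
    simp [Finset.insert_erase hp.2]
  · rintro ⟨B, c⟩ hp
    rw [Finset.mem_sigma, Finset.mem_sdiff] at hp
    simp [Finset.erase_insert_of_ne, Finset.erase_eq_of_notMem hp.2.2, Finset.erase_insert hp.2.2]
  · rintro ⟨C, c⟩ hp
    rfl

/-- The exchange-mean inequality: picking the max element `p`. -/
lemma exchange_mean (S : Finset α) (x : α → ℝ) (p : α) (hp : p ∉ S)
    (hmax : ∀ b ∈ S, x b ≤ x p) (Φ : Finset α → ℝ)
    (hΦ : ∀ A, A ⊆ insert p S → ∀ a ∈ A, ∀ b ∈ insert p S, b ∉ A → x a ≤ x b →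
      Φ A ≤ Φ (insert b (A.erase a))) (k : ℕ) :
    ((k+1 : ℕ) : ℝ) * ∑ C ∈ S.powersetCard (k+1), Φ C
      ≤ ((S.card - k : ℕ) : ℝ) * ∑ B ∈ S.powersetCard k, Φ (insert p B) := by
  rw [← pair_count S k (fun B => Φ (insert p B))]
  rw [Finset.mul_sum]
  refine Finset.sum_le_sum fun C hC => ?_
  rw [Finset.mem_powersetCard] at hC
  have hcount : ((k+1 : ℕ) : ℝ) * Φ C = ∑ _c ∈ C, Φ C := by
    rw [Finset.sum_const, hC.2, nsmul_eq_mul]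
  rw [hcount]
  refine Finset.sum_le_sum fun c hc => ?_
  exact hΦ C (hC.1.trans (Finset.subset_insert _ _)) c hc p (Finset.mem_insert_self _ _)
    (fun hpc => hp (hC.1 hpc)) (hmax c (hC.1 hc))

end Subset

section SubsetNA
variable {α : Type*} [DecidableEq α]

/-- Negative association for uniform `k`-subsets: exchange-monotone `Φ` and
exchange-antitone `Ψ` are negatively correlated. -/
lemma subset_na (x : α → ℝ) (S : Finset α) (k : ℕ) (Φ Ψ : Finset α → ℝ)
    (hΦ : ∀ A, A ⊆ S → ∀ a ∈ A, ∀ b ∈ S, b ∉ A → x a ≤ x b → Φ A ≤ Φ (insert b (A.erase a)))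
    (hΨ : ∀ A, A ⊆ S → ∀ a ∈ A, ∀ b ∈ S, b ∉ A → x a ≤ x b → Ψ (insert b (A.erase a)) ≤ Ψ A) :
    ((S.card.choose k : ℕ) : ℝ) * ∑ A ∈ S.powersetCard k, Φ A * Ψ A
      ≤ (∑ A ∈ S.powersetCard k, Φ A) * (∑ A ∈ S.powersetCard k, Ψ A) := by
  induction S using Finset.strongInduction generalizing k Φ Ψ with
  | _ S ih =>
  match k with
  | 0 => simp
  | (k+1) =>
  by_cases hcard : S.card < k + 1
  · rw [Finset.powersetCard_eq_empty.2 hcard]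
    simp
  push_neg at hcard
  have hSne : S.Nonempty := Finset.card_pos.1 (by omega)
  obtain ⟨p, hpS, hmax⟩ := Finset.exists_max_image S x hSne
  set S' := S.erase p with hS'
  have hpS' : p ∉ S' := Finset.notMem_erase _ _
  have hins : insert p S' = S := Finset.insert_erase hpS
  have hcardS : S.card = S'.card + 1 := by
    rw [hS', Finset.card_erase_of_mem hpS]; omega
  have hmax' : ∀ b ∈ S', x b ≤ x p := fun b hb => hmax b (Finset.mem_of_mem_erase hb)
  have hS'S : S' ⊆ S := Finset.erase_subset _ _
  -- split the powersetCard
  have hsplit : S.powersetCard (k+1)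
      = S'.powersetCard (k+1) ∪ (S'.powersetCard k).image (insert p) := by
    conv_lhs => rw [← hins]
    exact Finset.powersetCard_succ_insert hpS' k
  have hdisj : Disjoint (S'.powersetCard (k+1)) ((S'.powersetCard k).image (insert p)) := by
    rw [Finset.disjoint_left]
    rintro A hA hA'
    rw [Finset.mem_powersetCard] at hA
    obtain ⟨B, hB, rfl⟩ := Finset.mem_image.1 hA'
    exact hpS' (hA.1 (Finset.mem_insert_self _ _))
  have hinj : ∀ B1 ∈ S'.powersetCard k, ∀ B2 ∈ S'.powersetCard k,
      insert p B1 = insert p B2 → B1 = B2 := by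
    intro B1 h1 B2 h2 he
    rw [Finset.mem_powersetCard] at h1 h2
    have e1 : (insert p B1).erase p = B1 := Finset.erase_insert (fun h => hpS' (h1.1 h))
    have e2 : (insert p B2).erase p = B2 := Finset.erase_insert (fun h => hpS' (h2.1 h))
    rw [← e1, ← e2, he]
  -- sums split
  have hsum : ∀ (t : Finset α → ℝ), ∑ A ∈ S.powersetCard (k+1), t A
      = (∑ A ∈ S'.powersetCard (k+1), t A) + ∑ B ∈ S'.powersetCard k, t (insert p B) := by
    intro t
    rw [hsplit, Finset.sum_union hdisj, Finset.sum_image hinj]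
  rw [hsum (fun A => Φ A * Ψ A), hsum Φ, hsum Ψ]
  set F1 := ∑ B ∈ S'.powersetCard k, Φ (insert p B) with hF1
  set F0 := ∑ A ∈ S'.powersetCard (k+1), Φ A with hF0
  set H1 := ∑ B ∈ S'.powersetCard k, Ψ (insert p B) with hH1
  set H0 := ∑ A ∈ S'.powersetCard (k+1), Ψ A with hH0
  set P1 := ∑ B ∈ S'.powersetCard k, Φ (insert p B) * Ψ (insert p B) with hP1
  set P0 := ∑ A ∈ S'.powersetCard (k+1), Φ A * Ψ A with hP0
  -- restricted exchange hypotheses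
  have hΦ' : ∀ A, A ⊆ S' → ∀ a ∈ A, ∀ b ∈ S', b ∉ A → x a ≤ x b → Φ A ≤ Φ (insert b (A.erase a)) :=
    fun A hA a ha b hb hba hx => hΦ A (hA.trans hS'S) a ha b (hS'S hb) hba hx
  have hΨ' : ∀ A, A ⊆ S' → ∀ a ∈ A, ∀ b ∈ S', b ∉ A → x a ≤ x b → Ψ (insert b (A.erase a)) ≤ Ψ A :=
    fun A hA a ha b hb hba hx => hΨ A (hA.trans hS'S) a ha b (hS'S hb) hba hx
  have hins_comm : ∀ (A : Finset α) (a b : α), a ∈ A → A ⊆ S' → b ∈ S' → b ∉ A →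
      insert b ((insert p A).erase a) = insert p (insert b (A.erase a)) := by
    intro A a b ha hA hb hbA
    have hap : a ≠ p := fun h => hpS' (h ▸ hA ha)
    have hbp : b ≠ p := fun h => hpS' (h ▸ hb)
    ext z
    simp only [Finset.mem_insert, Finset.mem_erase]
    constructor
    · rintro (rfl | ⟨hza, (rfl | hz)⟩)
      · exact Or.inr (Or.inl rfl)
      · exact Or.inl rfl
      · exact Or.inr (Or.inr ⟨hza, hz⟩)
    · rintro (rfl | (rfl | ⟨hza, hz⟩))
      · exact Or.inr ⟨Ne.symm hap, Or.inl rfl⟩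
      · exact Or.inl rfl
      · exact Or.inr ⟨hza, Or.inr hz⟩
  have hΦ1 : ∀ A, A ⊆ S' → ∀ a ∈ A, ∀ b ∈ S', b ∉ A → x a ≤ x b →
      Φ (insert p A) ≤ Φ (insert p (insert b (A.erase a))) := by
    intro A hA a ha b hb hbA hx
    have := hΦ (insert p A) (by rw [← hins] ; exact Finset.insert_subset_insert _ hA)
      a (Finset.mem_insert_of_mem ha) b (hS'S hb)
      (by simp only [Finset.mem_insert]
          rintro (rfl | h)
          exacts [hpS' hb, hbA h]) hx
    rwa [hins_comm A a b ha hA hb hbA] at this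
  have hΨ1 : ∀ A, A ⊆ S' → ∀ a ∈ A, ∀ b ∈ S', b ∉ A → x a ≤ x b →
      Ψ (insert p (insert b (A.erase a))) ≤ Ψ (insert p A) := by
    intro A hA a ha b hb hbA hx
    have := hΨ (insert p A) (by rw [← hins]; exact Finset.insert_subset_insert _ hA)
      a (Finset.mem_insert_of_mem ha) b (hS'S hb)
      (by simp only [Finset.mem_insert]
          rintro (rfl | h)
          exacts [hpS' hb, hbA h]) hx
    rwa [hins_comm A a b ha hA hb hbA] at this
  -- induction hypotheses
  have IH1 : ((S'.card.choose k : ℕ) : ℝ) * P1 ≤ F1 * H1 :=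
    ih S' (Finset.erase_ssubset hpS) k (fun B => Φ (insert p B)) (fun B => Ψ (insert p B)) hΦ1 hΨ1
  have IH0 : ((S'.card.choose (k+1) : ℕ) : ℝ) * P0 ≤ F0 * H0 :=
    ih S' (Finset.erase_ssubset hpS) (k+1) Φ Ψ hΦ' hΨ'
  -- exchange mean inequalities
  have hΦins : ∀ A, A ⊆ insert p S' → ∀ a ∈ A, ∀ b ∈ insert p S', b ∉ A → x a ≤ x b →
      Φ A ≤ Φ (insert b (A.erase a)) := by rw [hins]; exact hΦ
  have hΨins : ∀ A, A ⊆ insert p S' → ∀ a ∈ A, ∀ b ∈ insert p S', b ∉ A → x a ≤ x b →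
      (fun A => -Ψ A) A ≤ (fun A => -Ψ A) (insert b (A.erase a)) := by
    intro A hA a ha b hb hbA hx
    simp only [neg_le_neg_iff]
    exact (by rw [hins] at hA hb; exact hΨ A hA a ha b hb hbA hx)
  have hC : ((k+1 : ℕ) : ℝ) * F0 ≤ ((S'.card - k : ℕ) : ℝ) * F1 :=
    exchange_mean S' x p hpS' hmax' Φ hΦins k
  have hD' := exchange_mean S' x p hpS' hmax' (fun A => -Ψ A) hΨins k
  have hD : ((S'.card - k : ℕ) : ℝ) * H1 ≤ ((k+1 : ℕ) : ℝ) * H0 := by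
    have e0 : ∑ A ∈ S'.powersetCard (k+1), (fun A => -Ψ A) A = -H0 := by
      rw [hH0]; simp
    have e1 : ∑ B ∈ S'.powersetCard k, (fun A => -Ψ A) (insert p B) = -H1 := by
      rw [hH1]; simp
    rw [e0, e1] at hD'
    linarith [hD']
  -- numeric identities
  have hchoose : S.card.choose (k+1) = S'.card.choose k + S'.card.choose (k+1) := by
    rw [hcardS]; exact Nat.choose_succ_succ' S'.card k
  set m1 := S'.card.choose k with hm1
  set m0 := S'.card.choose (k+1) with hm0
  have hE : m0 * (k+1) = m1 * (S'.card - k) := Nat.choose_succ_right_eq S'.card k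
  rw [hchoose]
  by_cases hm0z : m0 = 0
  · -- the (k+1)-part sums over S' are empty
    have hempty : S'.powersetCard (k+1) = ∅ :=
      Finset.powersetCard_eq_empty.2 (Nat.choose_eq_zero_iff.1 hm0z)
    have hF0z : F0 = 0 := by rw [hF0, hempty, Finset.sum_empty]
    have hH0z : H0 = 0 := by rw [hH0, hempty, Finset.sum_empty]
    have hP0z : P0 = 0 := by rw [hP0, hempty, Finset.sum_empty]
    rw [hF0z, hH0z, hP0z, hm0z]
    push_cast
    simpa using IH1
  · have hkS : k + 1 ≤ S'.card := by
      by_contra hlt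
      exact hm0z (Nat.choose_eq_zero_iff.2 (by omega))
    have hm1pos : 0 < m1 := Nat.choose_pos (by omega)
    have hm0pos : 0 < m0 := Nat.pos_of_ne_zero hm0z
    set nk := S'.card - k with hnk
    have hnkpos : 0 < nk := by omega
    -- real versions
    have hEr : (m0 : ℝ) * ((k+1 : ℕ) : ℝ) = (m1 : ℝ) * ((nk : ℕ) : ℝ) := by
      exact_mod_cast congrArg (Nat.cast : ℕ → ℝ) hE
    have hr1 : (0:ℝ) < (m1 : ℝ) := by exact_mod_cast hm1pos
    have hr0 : (0:ℝ) < (m0 : ℝ) := by exact_mod_cast hm0pos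
    have hnkr : (0:ℝ) < ((nk : ℕ) : ℝ) := by exact_mod_cast hnkpos
    have hk1r : (0:ℝ) < ((k+1 : ℕ) : ℝ) := by positivity
    -- conditional mean comparisons
    have hCF : (m1 : ℝ) * F0 ≤ (m0 : ℝ) * F1 := by
      have h1 : (m0 : ℝ) * (((k+1:ℕ)) * F0) ≤ (m0 : ℝ) * (((nk : ℕ)) * F1) :=
        mul_le_mul_of_nonneg_left hC (le_of_lt hr0)
      have h2 : ((nk:ℕ):ℝ) * ((m1:ℝ) * F0) ≤ ((nk:ℕ):ℝ) * ((m0:ℝ) * F1) := by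
        calc ((nk:ℕ):ℝ) * ((m1:ℝ) * F0) = (m0 : ℝ) * (((k+1:ℕ):ℝ) * F0) := by
              linear_combination F0 * hEr.symm
          _ ≤ (m0 : ℝ) * (((nk:ℕ):ℝ) * F1) := h1
          _ = ((nk:ℕ):ℝ) * ((m0:ℝ) * F1) := by ring
      exact le_of_mul_le_mul_left h2 hnkr
    have hDH : (m0 : ℝ) * H1 ≤ (m1 : ℝ) * H0 := by
      have h1 : (m1 : ℝ) * (((nk:ℕ):ℝ) * H1) ≤ (m1 : ℝ) * (((k+1:ℕ):ℝ) * H0) :=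
        mul_le_mul_of_nonneg_left hD (le_of_lt hr1)
      have h2 : ((k+1:ℕ):ℝ) * ((m0:ℝ) * H1) ≤ ((k+1:ℕ):ℝ) * ((m1:ℝ) * H0) := by
        calc ((k+1:ℕ):ℝ) * ((m0:ℝ) * H1) = (m1 : ℝ) * (((nk:ℕ):ℝ) * H1) := by
              linear_combination H1 * hEr
          _ ≤ (m1 : ℝ) * (((k+1:ℕ):ℝ) * H0) := h1
          _ = ((k+1:ℕ):ℝ) * ((m1:ℝ) * H0) := by ring
      exact le_of_mul_le_mul_left h2 hk1r
    have key : (0:ℝ) ≤ ((m0:ℝ) * F1 - (m1:ℝ) * F0) * ((m1:ℝ) * H0 - (m0:ℝ) * H1) :=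
      mul_nonneg (by linarith) (by linarith)
    -- final algebra
    have hsumpos : (0:ℝ) < (m1 : ℝ) * (m0 : ℝ) := mul_pos hr1 hr0
    rw [← mul_le_mul_iff_right₀ hsumpos]
    have A2 : ((m1:ℝ) + m0) * ((m0:ℝ) * ((m1:ℝ) * P1)) ≤ ((m1:ℝ) + m0) * ((m0:ℝ) * (F1 * H1)) := by
      have := mul_le_mul_of_nonneg_left IH1 (le_of_lt hr0)
      exact mul_le_mul_of_nonneg_left this (by positivity)
    have B2 : ((m1:ℝ) + m0) * ((m1:ℝ) * ((m0:ℝ) * P0)) ≤ ((m1:ℝ) + m0) * ((m1:ℝ) * (F0 * H0)) := by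
      have := mul_le_mul_of_nonneg_left IH0 (le_of_lt hr1)
      exact mul_le_mul_of_nonneg_left this (by positivity)
    push_cast
    nlinarith [A2, B2, key]

end SubsetNA

section Perm
variable {n : ℕ}

/-- The exchange equiv `↥A ≃ ↥(insert b (A.erase a))`, induced by `Equiv.swap a b`. -/
def exchEquiv (A : Finset (Fin n)) (a b : Fin n) (ha : a ∈ A) (hb : b ∉ A) :
    ↥A ≃ ↥(insert b (A.erase a)) :=
  (Equiv.swap a b).subtypeEquiv (by
    intro c
    by_cases h1 : c = a
    · subst h1
      simp [Equiv.swap_apply_left, ha]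
    · by_cases h2 : c = b
      · subst h2
        have hab : a ≠ c := fun h => hb (h ▸ ha)
        rw [Equiv.swap_apply_right]
        simp [hb, Finset.mem_insert, Finset.mem_erase, hab.symm, Ne.symm hab, hab]
      · rw [Equiv.swap_apply_of_ne_of_ne h1 h2]
        simp [Finset.mem_insert, Finset.mem_erase, h1, h2])

lemma exchEquiv_coe (A : Finset (Fin n)) (a b : Fin n) (ha : a ∈ A) (hb : b ∉ A) (c : ↥A) :
    ((exchEquiv A a b ha hb c : ↥(insert b (A.erase a))) : Fin n)
      = if (c : Fin n) = a then b else (c : Fin n) := by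
  have hcb : (c : Fin n) ≠ b := fun h => hb (h ▸ c.2)
  by_cases h : (c : Fin n) = a
  · simp [exchEquiv, h]
  · simp [exchEquiv, Equiv.swap_apply_of_ne_of_ne h hcb, if_neg h]

/-- Sums of a monotone `f` over bijections `↥K ≃ ↥A` increase under an upward exchange in `A`. -/
lemma sumEquiv_exchange (x : Fin n → ℝ) (K : Finset (Fin n)) (f : (↥K → ℝ) → ℝ)
    (hf : Monotone f) (A : Finset (Fin n)) (a b : Fin n) (ha : a ∈ A) (hb : b ∉ A)
    (hx : x a ≤ x b) :
    ∑ e : ↥K ≃ ↥A, f (fun i => x (e i))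
      ≤ ∑ e : ↥K ≃ ↥(insert b (A.erase a)), f (fun i => x (e i)) := by
  have hbij : ∑ e : ↥K ≃ ↥(insert b (A.erase a)), f (fun i => x (e i))
      = ∑ e : ↥K ≃ ↥A, f (fun i => x ((e.trans (exchEquiv A a b ha hb)) i)) := by
    exact (Equiv.sum_comp (Equiv.equivCongr (Equiv.refl ↥K) (exchEquiv A a b ha hb))
      (fun e => f (fun i => x (e i)))).symm
  rw [hbij]
  refine Finset.sum_le_sum fun e _ => ?_
  apply hf
  intro i
  simp only [Equiv.trans_apply, exchEquiv_coe]
  by_cases h : ((e i : ↥A) : Fin n) = a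
  · rw [if_pos h, h]
    exact hx
  · rw [if_neg h]

end Perm

section Perm2
variable {n : ℕ}

lemma compl_exchange (A : Finset (Fin n)) (a b : Fin n) (ha : a ∈ A) (hb : b ∉ A) :
    (insert b (A.erase a))ᶜ = insert a (Aᶜ.erase b) := by
  have hab : a ≠ b := fun h => hb (h ▸ ha)
  ext z
  simp only [Finset.mem_compl, Finset.mem_insert, Finset.mem_erase]
  push_neg
  constructor
  · rintro ⟨hzb, hz⟩
    by_cases hza : z = a
    · exact Or.inl hza
    · exact Or.inr ⟨hzb, hz hza⟩
  · rintro (rfl | ⟨hzb, hz⟩)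
    · exact ⟨hab, fun h => absurd rfl h⟩
    · exact ⟨hzb, fun _ => hz⟩

/-- restriction of a permutation to an equiv of subtypes -/
def permRestr (σ : Equiv.Perm (Fin n)) (K A : Finset (Fin n))
    (h1 : ∀ z ∈ K, σ z ∈ A) (h2 : ∀ z ∈ A, σ.symm z ∈ K) : ↥K ≃ ↥A where
  toFun i := ⟨σ i.1, h1 _ i.2⟩
  invFun a := ⟨σ.symm a.1, h2 _ a.2⟩
  left_inv i := by ext; simp
  right_inv a := by ext; simp

/-- gluing two subtype equivs into a permutation -/
def permGlue (I A : Finset (Fin n)) (e : ↥I ≃ ↥A) (e' : ↥(Iᶜ) ≃ ↥(Aᶜ)) :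
    Equiv.Perm (Fin n) where
  toFun z := if h : z ∈ I then (e ⟨z, h⟩ : Fin n) else (e' ⟨z, Finset.mem_compl.2 h⟩ : Fin n)
  invFun z := if h : z ∈ A then (e.symm ⟨z, h⟩ : Fin n) else (e'.symm ⟨z, Finset.mem_compl.2 h⟩ : Fin n)
  left_inv := by
    intro z
    by_cases h : z ∈ I
    · simp only [dif_pos h]
      have hA : ((e ⟨z, h⟩ : ↥A) : Fin n) ∈ A := (e ⟨z, h⟩).2
      rw [dif_pos hA, Subtype.coe_eta, Equiv.symm_apply_apply]
    · simp only [dif_neg h]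
      have hA : ((e' ⟨z, Finset.mem_compl.2 h⟩ : ↥(Aᶜ)) : Fin n) ∉ A :=
        Finset.mem_compl.1 (e' ⟨z, Finset.mem_compl.2 h⟩).2
      rw [dif_neg hA, Subtype.coe_eta, Equiv.symm_apply_apply]
  right_inv := by
    intro z
    by_cases h : z ∈ A
    · simp only [dif_pos h]
      have hI : ((e.symm ⟨z, h⟩ : ↥I) : Fin n) ∈ I := (e.symm ⟨z, h⟩).2
      rw [dif_pos hI, Subtype.coe_eta, Equiv.apply_symm_apply]
    · simp only [dif_neg h]
      have hI : ((e'.symm ⟨z, Finset.mem_compl.2 h⟩ : ↥(Iᶜ)) : Fin n) ∉ I :=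
        Finset.mem_compl.1 (e'.symm ⟨z, Finset.mem_compl.2 h⟩).2
      rw [dif_neg hI, Subtype.coe_eta, Equiv.apply_symm_apply]

end Perm2

section Perm3
variable {n : ℕ}

lemma image_mem1 {σ : Equiv.Perm (Fin n)} {I A : Finset (Fin n)}
    (hσ : Finset.image (⇑σ) I = A) : ∀ z ∈ I, σ z ∈ A :=
  fun z hz => hσ ▸ Finset.mem_image_of_mem σ hz

lemma image_mem2 {σ : Equiv.Perm (Fin n)} {I A : Finset (Fin n)}
    (hσ : Finset.image (⇑σ) I = A) : ∀ z ∈ A, σ.symm z ∈ I := by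
  intro z hz
  rw [← hσ] at hz
  obtain ⟨w, hw, rfl⟩ := Finset.mem_image.1 hz
  simpa using hw

lemma image_mem1c {σ : Equiv.Perm (Fin n)} {I A : Finset (Fin n)}
    (hσ : Finset.image (⇑σ) I = A) : ∀ z ∈ Iᶜ, σ z ∈ Aᶜ := by
  intro z hz
  refine Finset.mem_compl.2 fun hA => Finset.mem_compl.1 hz ?_
  have := image_mem2 hσ _ hA
  simpa using this

lemma image_mem2c {σ : Equiv.Perm (Fin n)} {I A : Finset (Fin n)}
    (hσ : Finset.image (⇑σ) I = A) : ∀ z ∈ Aᶜ, σ.symm z ∈ Iᶜ := by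
  intro z hz
  refine Finset.mem_compl.2 fun hI => Finset.mem_compl.1 hz ?_
  have := image_mem1 hσ _ hI
  simpa using this

lemma permGlue_image {I A : Finset (Fin n)} (hcard : A.card = I.card)
    (e : ↥I ≃ ↥A) (e' : ↥(Iᶜ) ≃ ↥(Aᶜ)) :
    Finset.image (⇑(permGlue I A e e')) I = A := by
  have hsub : Finset.image (⇑(permGlue I A e e')) I ⊆ A := by
    intro z hz
    obtain ⟨w, hw, rfl⟩ := Finset.mem_image.1 hz
    have : (permGlue I A e e') w = (e ⟨w, hw⟩ : Fin n) := by
      simp [permGlue, dif_pos hw]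
    rw [this]
    exact (e ⟨w, hw⟩).2
  refine Finset.eq_of_subset_of_card_le hsub ?_
  rw [Finset.card_image_of_injective I (permGlue I A e e').injective, hcard]

lemma fiber_eq (x : Fin n → ℝ) (I A : Finset (Fin n)) (hcard : A.card = I.card)
    (f : (↥I → ℝ) → ℝ) (g : (↥(Iᶜ) → ℝ) → ℝ) :
    ∑ σ ∈ Finset.univ.filter (fun σ : Equiv.Perm (Fin n) => Finset.image (⇑σ) I = A),
      (f (fun i => x (σ i.1)) * g (fun j => x (σ j.1)))
    = (∑ e : ↥I ≃ ↥A, f (fun i => x (e i))) * (∑ e : ↥(Iᶜ) ≃ ↥(Aᶜ), g (fun j => x (e j))) := by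
  rw [Finset.sum_mul_sum, ← Fintype.sum_prod_type
    (f := fun p : (↥I ≃ ↥A) × (↥(Iᶜ) ≃ ↥(Aᶜ)) =>
      f (fun i => x ((p.1 i : ↥A) : Fin n)) * g (fun j => x ((p.2 j : ↥(Aᶜ)) : Fin n)))]
  refine Finset.sum_bij'
    (fun σ hσ => (permRestr σ I A (image_mem1 (Finset.mem_filter.1 hσ).2)
        (image_mem2 (Finset.mem_filter.1 hσ).2),
      permRestr σ Iᶜ Aᶜ (image_mem1c (Finset.mem_filter.1 hσ).2)
        (image_mem2c (Finset.mem_filter.1 hσ).2)))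
    (fun p _ => permGlue I A p.1 p.2) ?_ ?_ ?_ ?_ ?_
  · intro σ hσ
    exact Finset.mem_univ _
  · intro p hp
    exact Finset.mem_filter.2 ⟨Finset.mem_univ _, permGlue_image hcard p.1 p.2⟩
  · intro σ hσ
    ext z
    by_cases h : z ∈ I
    · simp [permGlue, permRestr, dif_pos h]
    · simp [permGlue, permRestr, dif_neg h]
  · intro p hp
    refine Prod.ext ?_ ?_
    · ext i
      simp [permRestr, permGlue, dif_pos i.2]
    · ext j
      have hj : (j : Fin n) ∉ I := Finset.mem_compl.1 j.2
      simp [permRestr, permGlue, dif_neg hj]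
  · intro σ hσ
    rfl

lemma perm_factor (x : Fin n → ℝ) (I : Finset (Fin n))
    (f : (↥I → ℝ) → ℝ) (g : (↥(Iᶜ) → ℝ) → ℝ) :
    ∑ σ : Equiv.Perm (Fin n), f (fun i => x (σ i.1)) * g (fun j => x (σ j.1))
    = ∑ A ∈ (Finset.univ : Finset (Fin n)).powersetCard I.card,
        (∑ e : ↥I ≃ ↥A, f (fun i => x (e i))) * (∑ e : ↥(Iᶜ) ≃ ↥(Aᶜ), g (fun j => x (e j))) := by
  rw [← Finset.sum_fiberwise_of_maps_to (g := fun σ : Equiv.Perm (Fin n) => Finset.image (⇑σ) I)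
    (t := (Finset.univ : Finset (Fin n)).powersetCard I.card)
    (fun σ _ => Finset.mem_powersetCard.2 ⟨Finset.subset_univ _,
      Finset.card_image_of_injective I σ.injective⟩)]
  exact Finset.sum_congr rfl fun A hA =>
    fiber_eq x I A (Finset.mem_powersetCard.1 hA).2 f g

end Perm3

section Core
variable {n : ℕ}

lemma sumEquiv_exchange_compl (x : Fin n → ℝ) (K : Finset (Fin n)) (g : (↥K → ℝ) → ℝ)
    (hg : Monotone g) (A : Finset (Fin n)) (a b : Fin n) (ha : a ∈ A) (hb : b ∉ A)
    (hx : x a ≤ x b) :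
    ∑ e : ↥K ≃ ↥((insert b (A.erase a))ᶜ), g (fun j => x (e j))
      ≤ ∑ e : ↥K ≃ ↥(Aᶜ), g (fun j => x (e j)) := by
  have hab : a ≠ b := fun h => hb (h ▸ ha)
  have hca : (insert b (A.erase a))ᶜ = insert a (Aᶜ.erase b) := compl_exchange A a b ha hb
  have ha' : a ∈ insert a (Aᶜ.erase b) := Finset.mem_insert_self _ _
  have hb' : b ∉ insert a (Aᶜ.erase b) := by
    simp [Finset.mem_insert, Ne.symm hab, hab]
  have key := sumEquiv_exchange x K g hg (insert a (Aᶜ.erase b)) a b ha' hb' hx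
  have h2 : insert b ((insert a (Aᶜ.erase b)).erase a) = Aᶜ := by
    rw [Finset.erase_insert (fun h => (Finset.mem_compl.1 (Finset.mem_of_mem_erase h)) ha),
      Finset.insert_erase (Finset.mem_compl.2 hb)]
  rw [h2] at key
  rw [hca]
  exact key

lemma core (x : Fin n → ℝ) (I : Finset (Fin n)) (f : (↥I → ℝ) → ℝ) (g : (↥(Iᶜ) → ℝ) → ℝ)
    (hf : Monotone f) (hg : Monotone g) :
    (n.factorial : ℝ) *
        ∑ σ : Equiv.Perm (Fin n), f (fun i => x (σ i.1)) * g (fun j => x (σ j.1))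
      ≤ (∑ σ : Equiv.Perm (Fin n), f (fun i => x (σ i.1)))
          * (∑ σ : Equiv.Perm (Fin n), g (fun j => x (σ j.1))) := by
  classical
  set k := I.card with hk
  set Φ : Finset (Fin n) → ℝ := fun A => ∑ e : ↥I ≃ ↥A, f (fun i => x (e i)) with hΦdef
  set Ψ : Finset (Fin n) → ℝ := fun A => ∑ e : ↥(Iᶜ) ≃ ↥(Aᶜ), g (fun j => x (e j)) with hΨdef
  have hkn : k ≤ n := by
    simpa using Finset.card_le_univ I
  -- three sum identities
  have h1 : ∑ σ : Equiv.Perm (Fin n), f (fun i => x (σ i.1)) * g (fun j => x (σ j.1))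
      = ∑ A ∈ (Finset.univ : Finset (Fin n)).powersetCard k, Φ A * Ψ A :=
    perm_factor x I f g
  have hcard1 : ∀ A ∈ (Finset.univ : Finset (Fin n)).powersetCard k,
      (∑ _e : ↥I ≃ ↥A, (1:ℝ)) = (k.factorial : ℝ) := by
    intro A hA
    have hc : Fintype.card ↥I = Fintype.card ↥A := by
      rw [Fintype.card_coe, Fintype.card_coe, (Finset.mem_powersetCard.1 hA).2]
    rw [Finset.sum_const, Finset.card_univ, Fintype.card_equiv (Fintype.equivOfCardEq hc),
      Fintype.card_coe, nsmul_eq_mul, mul_one]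
  have hcard2 : ∀ A ∈ (Finset.univ : Finset (Fin n)).powersetCard k,
      (∑ _e : ↥(Iᶜ) ≃ ↥(Aᶜ), (1:ℝ)) = ((n - k).factorial : ℝ) := by
    intro A hA
    have hc : Fintype.card ↥(Iᶜ) = Fintype.card ↥(Aᶜ) := by
      rw [Fintype.card_coe, Fintype.card_coe, Finset.card_compl, Finset.card_compl,
        (Finset.mem_powersetCard.1 hA).2]
    rw [Finset.sum_const, Finset.card_univ, Fintype.card_equiv (Fintype.equivOfCardEq hc),
      Fintype.card_coe, nsmul_eq_mul, mul_one, Finset.card_compl, Fintype.card_fin]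
  have h2 : ∑ σ : Equiv.Perm (Fin n), f (fun i => x (σ i.1))
      = ((n - k).factorial : ℝ) * ∑ A ∈ (Finset.univ : Finset (Fin n)).powersetCard k, Φ A := by
    have := perm_factor x I f (fun _ => (1:ℝ))
    simp only [mul_one] at this
    rw [this, Finset.mul_sum]
    refine Finset.sum_congr rfl fun A hA => ?_
    rw [hcard2 A hA]
    ring
  have h3 : ∑ σ : Equiv.Perm (Fin n), g (fun j => x (σ j.1))
      = (k.factorial : ℝ) * ∑ A ∈ (Finset.univ : Finset (Fin n)).powersetCard k, Ψ A := by
    have := perm_factor x I (fun _ => (1:ℝ)) g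
    simp only [one_mul] at this
    rw [this, Finset.mul_sum]
    refine Finset.sum_congr rfl fun A hA => ?_
    rw [hcard1 A hA]
  -- exchange monotonicity
  have hΦmono : ∀ A, A ⊆ (Finset.univ : Finset (Fin n)) → ∀ a ∈ A, ∀ b ∈ (Finset.univ : Finset (Fin n)),
      b ∉ A → x a ≤ x b → Φ A ≤ Φ (insert b (A.erase a)) :=
    fun A _ a ha b _ hb hx => sumEquiv_exchange x I f hf A a b ha hb hx
  have hΨanti : ∀ A, A ⊆ (Finset.univ : Finset (Fin n)) → ∀ a ∈ A, ∀ b ∈ (Finset.univ : Finset (Fin n)),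
      b ∉ A → x a ≤ x b → Ψ (insert b (A.erase a)) ≤ Ψ A :=
    fun A _ a ha b _ hb hx => sumEquiv_exchange_compl x (Iᶜ) g hg A a b ha hb hx
  have hna := subset_na x (Finset.univ : Finset (Fin n)) k Φ Ψ hΦmono hΨanti
  rw [Finset.card_univ, Fintype.card_fin] at hna
  have hfact : n.choose k * k.factorial * (n - k).factorial = n.factorial :=
    Nat.choose_mul_factorial_mul_factorial hkn
  rw [h1, h2, h3]
  calc (n.factorial : ℝ) * ∑ A ∈ (Finset.univ : Finset (Fin n)).powersetCard k, Φ A * Ψ A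
      = ((k.factorial : ℝ) * ((n-k).factorial : ℝ)) *
          ((n.choose k : ℝ) * ∑ A ∈ (Finset.univ : Finset (Fin n)).powersetCard k, Φ A * Ψ A) := by
        rw [← hfact]
        push_cast
        ring
    _ ≤ ((k.factorial : ℝ) * ((n-k).factorial : ℝ)) *
          ((∑ A ∈ (Finset.univ : Finset (Fin n)).powersetCard k, Φ A)
            * (∑ A ∈ (Finset.univ : Finset (Fin n)).powersetCard k, Ψ A)) := by
        refine mul_le_mul_of_nonneg_left hna (by positivity)
    _ = (((n - k).factorial : ℝ) * ∑ A ∈ (Finset.univ : Finset (Fin n)).powersetCard k, Φ A)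
          * ((k.factorial : ℝ) * ∑ A ∈ (Finset.univ : Finset (Fin n)).powersetCard k, Ψ A) := by
        ring

end Core

section Main
variable {n : ℕ}

lemma main_sum (x : Fin n → ℝ) (I J : Finset (Fin n)) (hIJ : Disjoint I J)
    (f : (↥I → ℝ) → ℝ) (g : (↥J → ℝ) → ℝ) (hf : Monotone f) (hg : Monotone g) :
    (n.factorial : ℝ) *
        ∑ σ : Equiv.Perm (Fin n), f (fun i => x (σ i.1)) * g (fun j => x (σ j.1))
      ≤ (∑ σ : Equiv.Perm (Fin n), f (fun i => x (σ i.1)))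
          * (∑ σ : Equiv.Perm (Fin n), g (fun j => x (σ j.1))) := by
  classical
  have hIsub : ∀ i : ↥I, (i : Fin n) ∈ Jᶜ :=
    fun i => Finset.mem_compl.2 (Finset.disjoint_left.1 hIJ i.2)
  have hJsub : ∀ j : ↥J, (j : Fin n) ∈ Jᶜᶜ :=
    fun j => Finset.mem_compl.2 (fun h => Finset.mem_compl.1 h j.2)
  set f' : (↥(Jᶜ) → ℝ) → ℝ := fun v => f (fun i => v ⟨i.1, hIsub i⟩) with hf'def
  set g' : (↥(Jᶜᶜ) → ℝ) → ℝ := fun v => g (fun j => v ⟨j.1, hJsub j⟩) with hg'def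
  have hf' : Monotone f' := fun u v huv => hf (fun i => huv _)
  have hg' : Monotone g' := fun u v huv => hg (fun j => huv _)
  exact core x (Jᶜ) f' g' hf' hg'

end Main

open MeasureTheory

/-- A random vector distributed uniformly over all permutations of a fixed real vector
has negatively associated coordinates. -/
theorem negAssoc_permutation_distribution (n : ℕ) (hn : 0 < n) (x : Fin n → ℝ) :
    letI : MeasurableSpace (Equiv.Perm (Fin n)) := ⊤
    NegAssoc (PMF.uniformOfFintype (Equiv.Perm (Fin n))).toMeasure
      (fun (i : Fin n) (σ : Equiv.Perm (Fin n)) => x (σ i)) := by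
  letI : MeasurableSpace (Equiv.Perm (Fin n)) := ⊤
  haveI : MeasurableSingletonClass (Equiv.Perm (Fin n)) :=
    ⟨fun _ => MeasurableSpace.measurableSet_top⟩
  intro I J hIJ f g hmono
  set μ := (PMF.uniformOfFintype (Equiv.Perm (Fin n))).toMeasure with hμ
  haveI : IsProbabilityMeasure μ := PMF.toMeasure.isProbabilityMeasure _
  set N := Fintype.card (Equiv.Perm (Fin n)) with hNdef
  have hNfac : (N : ℝ) = (n.factorial : ℝ) := by
    rw [hNdef, Fintype.card_perm, Fintype.card_fin]
  have hNpos : (0 : ℝ) < (N : ℝ) := by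
    rw [hNfac]
    exact_mod_cast Nat.factorial_pos n
  have hconv : ∀ h : Equiv.Perm (Fin n) → ℝ,
      ∫ σ, h σ ∂μ = ((N : ℝ))⁻¹ * ∑ σ : Equiv.Perm (Fin n), h σ := by
    intro h
    rw [MeasureTheory.integral_fintype (Integrable.of_finite)]
    rw [Finset.mul_sum]
    refine Finset.sum_congr rfl fun σ _ => ?_
    rw [hμ, Measure.real_def, PMF.toMeasure_apply_singleton _ _ (MeasurableSpace.measurableSet_top),
      PMF.uniformOfFintype_apply, ENNReal.toReal_inv, ENNReal.toReal_natCast, smul_eq_mul]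
  rw [hconv, hconv, hconv]
  have hmain : (N : ℝ) *
        ∑ σ : Equiv.Perm (Fin n), f (fun i => x (σ i.1)) * g (fun j => x (σ j.1))
      ≤ (∑ σ : Equiv.Perm (Fin n), f (fun i => x (σ i.1)))
          * (∑ σ : Equiv.Perm (Fin n), g (fun j => x (σ j.1))) := by
    rw [hNfac]
    rcases hmono with ⟨hf, hg⟩ | ⟨hf, hg⟩
    · exact main_sum x I J hIJ f g hf hg
    · have hf' : Monotone (fun v : ↥I → ℝ => f (fun i => -(v i))) :=
        fun u v huv => hf (fun i => neg_le_neg (huv i))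
      have hg' : Monotone (fun v : ↥J → ℝ => g (fun j => -(v j))) :=
        fun u v huv => hg (fun j => neg_le_neg (huv j))
      have h := main_sum (fun i => -(x i)) I J hIJ _ _ hf' hg'
      simpa only [neg_neg] using h
  calc ((N : ℝ))⁻¹ * ∑ σ : Equiv.Perm (Fin n), f (fun i => x (σ i.1)) * g (fun j => x (σ j.1))
      = ((N : ℝ))⁻¹ * ((N : ℝ))⁻¹ * ((N : ℝ) *
          ∑ σ : Equiv.Perm (Fin n), f (fun i => x (σ i.1)) * g (fun j => x (σ j.1))) := by
        field_simp
    _ ≤ ((N : ℝ))⁻¹ * ((N : ℝ))⁻¹ *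
          ((∑ σ : Equiv.Perm (Fin n), f (fun i => x (σ i.1)))
            * (∑ σ : Equiv.Perm (Fin n), g (fun j => x (σ j.1)))) := by
        refine mul_le_mul_of_nonneg_left hmain (by positivity)
    _ = (((N : ℝ))⁻¹ * ∑ σ : Equiv.Perm (Fin n), f (fun i => x (σ i.1)))
          * (((N : ℝ))⁻¹ * ∑ σ : Equiv.Perm (Fin n), g (fun j => x (σ j.1))) := by
        ring
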